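/- Let p > 1 and n ≥ 1. Then (1 − 2^{−p}) ζ(p) − 1/(2^p (p − 1) n^{p−1}) ≤ Σ_{k=1}^{n} 1/(2k − 1)^p < (1 − 2^{−p}) ζ(p) − 1/(2 (p − 1)(2n + 1)^{p−1}). -/

import Mathlib

open Finset Real Filter

/-- The n×n Cauchy–Toeplitz matrix `T_n = [2/(1+2(i-j))]`. -/
noncomputable def cauchyToeplitz (n : ℕ) : Matrix (Fin n) (Fin n) ℝ :=
  fun i j => 2 / (1 + 2 * (((i : ℕ) : ℝ) - ((j : ℕ) : ℝ)))

/-- The ℓ_p norm of `T_n`: `(∑_{i,j} |a_{ij}|^p)^(1/p)`. -/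
noncomputable def lpNorm (n : ℕ) (p : ℝ) : ℝ :=
  (∑ i : Fin n, ∑ j : Fin n, |cauchyToeplitz n i j| ^ p) ^ (1 / p)

/-- The ℓ_{p,q} norm of `T_n`: `(∑_j (∑_i |a_{ij}|^p)^(q/p))^(1/q)`. -/
noncomputable def lpqNorm (n : ℕ) (p q : ℝ) : ℝ :=
  (∑ j : Fin n, (∑ i : Fin n, |cauchyToeplitz n i j| ^ p) ^ (q / p)) ^ (1 / q)

/-- The Riemann zeta function at a real argument (real-valued for real `p > 1`). -/
noncomputable def zetaR (p : ℝ) : ℝ := (riemannZeta p).re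


lemma zetaR_eq (p : ℝ) (hp : 1 < p) : zetaR p = ∑' n : ℕ, 1 / (n : ℝ) ^ p := by
  have h : riemannZeta p = ∑' n : ℕ, 1 / (n : ℂ) ^ (p : ℂ) :=
    zeta_eq_tsum_one_div_nat_cpow (by simpa using hp)
  have h2 : ∀ n : ℕ, (1 : ℂ) / (n : ℂ) ^ (p : ℂ) = ((1 / (n : ℝ) ^ p : ℝ) : ℂ) := by
    intro n
    rw [Complex.ofReal_div, Complex.ofReal_one, Complex.ofReal_cpow (Nat.cast_nonneg n)]
    norm_num
  rw [zetaR, h]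
  simp_rw [h2]
  rw [← Complex.ofReal_tsum]
  simp



lemma summable_f (p : ℝ) (hp : 1 < p) : Summable (fun n : ℕ => 1 / (n : ℝ) ^ p) :=
  Real.summable_one_div_nat_rpow.mpr hp

lemma summable_odd (p : ℝ) (hp : 1 < p) :
    Summable (fun j : ℕ => 1 / (2 * (j : ℝ) + 1) ^ p) := by
  have h : Summable ((fun n : ℕ => 1 / (n : ℝ) ^ p) ∘ (fun j : ℕ => 2 * j + 1)) :=
    (summable_f p hp).comp_injective (fun a b hab => by simpa using hab)
  convert h using 2 with j
  simp [Function.comp]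

set_option maxHeartbeats 1000000 in
lemma odd_tsum (p : ℝ) (hp : 1 < p) :
    ∑' j : ℕ, 1 / (2 * (j : ℝ) + 1) ^ p = (1 - 2 ^ (-p)) * zetaR p := by
  have hev : Summable (fun k : ℕ => 1 / ((2 * k : ℕ) : ℝ) ^ p) :=
    (summable_f p hp).comp_injective (fun a b hab => by simpa using hab)
  have hod : Summable (fun k : ℕ => 1 / ((2 * k + 1 : ℕ) : ℝ) ^ p) :=
    (summable_f p hp).comp_injective (fun a b hab => by simpa using hab)
  have key := tsum_even_add_odd (f := fun n : ℕ => 1 / (n : ℝ) ^ p) hev hod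
  have hev_eq : ∑' k : ℕ, 1 / ((2 * k : ℕ) : ℝ) ^ p = 2 ^ (-p) * zetaR p := by
    rw [zetaR_eq p hp, ← tsum_mul_left]
    congr 1 with k
    push_cast
    rw [Real.mul_rpow (by norm_num) (Nat.cast_nonneg k), Real.rpow_neg (by norm_num)]
    field_simp
  have hod_eq : (fun k : ℕ => 1 / ((2 * k + 1 : ℕ) : ℝ) ^ p)
      = fun j : ℕ => 1 / (2 * (j : ℝ) + 1) ^ p := by
    funext k; push_cast; ring_nf
  rw [hod_eq, hev_eq, ← zetaR_eq p hp] at key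
  linarith [key]


section aux

variable {p : ℝ}

lemma bern_neg (hp : 1 ≤ p) {u : ℝ} (hu : 0 < u) : 1 - p * (u - 1) ≤ u ^ (-p) := by
  have hui : (0:ℝ) < u⁻¹ := by positivity
  have hs : (-1:ℝ) ≤ u⁻¹ - 1 := by linarith
  have h := one_add_mul_self_le_rpow_one_add hs hp
  rw [show (1 + (u⁻¹ - 1)) = u⁻¹ from by ring, Real.inv_rpow hu.le,
    ← Real.rpow_neg hu.le] at h
  have key : 1 - p * (u - 1) ≤ 1 + p * (u⁻¹ - 1) := by
    have h1 : u * u⁻¹ = 1 := mul_inv_cancel₀ hu.ne'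
    nlinarith [sq_nonneg (u - 1), mul_pos hu hui]
  linarith

lemma tangent (hp : 1 ≤ p) {m x : ℝ} (hm : 0 < m) (hx : 0 < x) :
    m ^ (-p) * (1 - p * (x - m) / m) ≤ x ^ (-p) := by
  have h := bern_neg hp (div_pos hx hm)
  have e : (x / m) ^ (-p) = x ^ (-p) / m ^ (-p) := Real.div_rpow hx.le hm.le (-p)
  rw [e] at h
  have hmp : (0:ℝ) < m ^ (-p) := Real.rpow_pos_of_pos hm _
  have e2 : (x / m - 1) = (x - m) / m := by field_simp
  rw [e2] at h
  calc m ^ (-p) * (1 - p * (x - m) / m) ≤ m ^ (-p) * (x ^ (-p) / m ^ (-p)) := by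
        apply mul_le_mul_of_nonneg_left _ hmp.le
        rw [mul_div_assoc]
        linarith
    _ = x ^ (-p) := by field_simp

lemma integ_rpow (hp : 1 < p) {a b : ℝ} (ha : 0 < a) (hab : a ≤ b) :
    ∫ x in a..b, x ^ (-p) = (a ^ (1-p) - b ^ (1-p)) / (p - 1) := by
  rw [integral_rpow (Or.inr ⟨by intro h; linarith, by
      rw [Set.uIcc_of_le hab]; intro h; exact absurd (Set.mem_Icc.mp h).1 (by linarith)⟩)]
  rw [show -p + 1 = 1 - p from by ring]
  have h1 : p - 1 ≠ 0 := by linarith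
  have h2 : (1:ℝ) - p ≠ 0 := by intro h; apply h1; linarith
  field_simp
  ring

lemma rpow_intble {a b : ℝ} (ha : 0 < a) (hab : a ≤ b) :
    IntervalIntegrable (fun x : ℝ => x ^ (-p)) MeasureTheory.volume a b := by
  apply ContinuousOn.intervalIntegrable
  intro x hx
  rw [Set.uIcc_of_le hab] at hx
  have : (0:ℝ) < x := lt_of_lt_of_le ha (Set.mem_Icc.mp hx).1
  exact (Real.continuousAt_rpow_const x (-p) (Or.inl this.ne')).continuousWithinAt

lemma upper_pt (hp : 1 < p) {m : ℝ} (hm : 1 < m) :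
    2 * m ^ (-p) ≤ ((m-1) ^ (1-p) - (m+1) ^ (1-p)) / (p - 1) := by
  have hm0 : (0:ℝ) < m := by linarith
  have h1 := integ_rpow hp (show (0:ℝ) < m - 1 by linarith) (show m - 1 ≤ m + 1 by linarith)
  have h2 : (∫ x in (m-1)..(m+1), (m ^ (-p) * (1 - p * (x - m) / m))) = 2 * m ^ (-p) := by
    have e : (fun x : ℝ => m ^ (-p) * (1 - p * (x - m) / m))
        = fun x : ℝ => (m ^ (-p) * (1 + p)) + (-(m ^ (-p) * p / m)) * x := by
      funext x; field_simp; ring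
    rw [e, intervalIntegral.integral_add intervalIntegrable_const
        ((by continuity : Continuous fun x : ℝ => -(m ^ (-p) * p / m) * x).intervalIntegrable _ _),
      intervalIntegral.integral_const, intervalIntegral.integral_const_mul, integral_id]
    field_simp
    ring
  rw [← h1, ← h2]
  apply intervalIntegral.integral_mono_on (by linarith)
    ((Continuous.intervalIntegrable (by continuity) _ _))
    (rpow_intble (by linarith) (by linarith))
  intro x hx
  exact tangent hp.le hm0 (lt_of_lt_of_le (by linarith : (0:ℝ) < m - 1) hx.1)

lemma lower_pt (hp : 1 < p) {m : ℝ} (hm : 0 < m) :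
    (m ^ (1-p) - (m+2) ^ (1-p)) / (p - 1) < 2 * m ^ (-p) := by
  have hA := integ_rpow hp hm (show m ≤ m + 1 by linarith)
  have hB := integ_rpow hp (show (0:ℝ) < m + 1 by linarith) (show m + 1 ≤ m + 2 by linarith)
  have bA : (∫ x in m..(m+1), x ^ (-p)) ≤ m ^ (-p) := by
    have := intervalIntegral.integral_mono_on (show m ≤ m + 1 by linarith)
      (rpow_intble hm (by linarith))
      (intervalIntegrable_const (c := m ^ (-p)))
      (fun x hx => Real.rpow_le_rpow_of_nonpos hm hx.1 (by linarith))
    simpa using this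
  have bB : (∫ x in (m+1)..(m+2), x ^ (-p)) ≤ (m+1) ^ (-p) := by
    have := intervalIntegral.integral_mono_on (show m + 1 ≤ m + 2 by linarith)
      (rpow_intble (by linarith) (by linarith))
      (intervalIntegrable_const (c := (m+1) ^ (-p)))
      (fun x hx => Real.rpow_le_rpow_of_nonpos (by linarith) hx.1 (by linarith))
    simp at this
    linarith
  have hstr : (m+1) ^ (-p) < m ^ (-p) :=
    Real.rpow_lt_rpow_of_neg hm (by linarith) (by linarith)
  have split : (m ^ (1-p) - (m+2) ^ (1-p)) / (p - 1)
      = (∫ x in m..(m+1), x ^ (-p)) + ∫ x in (m+1)..(m+2), x ^ (-p) := by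
    rw [hA, hB]; ring
  rw [split]
  linarith

lemma tele_hasSum {G : ℕ → ℝ} (hmono : ∀ k, G (k+1) ≤ G k)
    (hlim : Tendsto G atTop (nhds 0)) :
    HasSum (fun k => G k - G (k+1)) (G 0) := by
  rw [hasSum_iff_tendsto_nat_of_nonneg (fun i => sub_nonneg.2 (hmono i))]
  have hpart : ∀ K, ∑ k ∈ range K, (G k - G (k+1)) = G 0 - G K :=
    fun K => Finset.sum_range_sub' G K
  simp_rw [hpart]
  simpa using (tendsto_const_nhds (x := G 0)).sub hlim

end aux


lemma half_div {X Y c : ℝ} (hc : c ≠ 0) : (X - Y)/c = 2*(X/(2*c) - Y/(2*c)) := by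
  field_simp

noncomputable def gg (p : ℝ) : ℕ → ℝ := fun j => (2 * (j:ℝ) + 1) ^ (-p)

lemma gg_eq (p : ℝ) (j : ℕ) : gg p j = 1 / (2 * (j:ℝ) + 1) ^ p := by
  rw [gg, Real.rpow_neg (by positivity), one_div]

lemma summable_gg {p : ℝ} (hp : 1 < p) : Summable (gg p) := by
  rw [show gg p = (fun j : ℕ => 1 / (2 * (j:ℝ) + 1) ^ p) from funext (gg_eq p)]
  exact summable_odd p hp

lemma summable_gg_tail {p : ℝ} (hp : 1 < p) (n : ℕ) :
    Summable (fun k => gg p (k + n)) :=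
  (summable_gg hp).comp_injective (add_left_injective n)

lemma base_tendsto (c : ℝ) : Tendsto (fun k : ℕ => c + 2*(k:ℝ)) atTop atTop := by
  apply tendsto_atTop_add_const_left
  exact Tendsto.const_mul_atTop two_pos tendsto_natCast_atTop_atTop

lemma G_lim {p : ℝ} (hp : 1 < p) (c : ℝ) :
    Tendsto (fun k : ℕ => (c + 2*(k:ℝ)) ^ (1-p) / (2*(p-1))) atTop (nhds 0) := by
  have h1 : Tendsto (fun k : ℕ => (c + 2*(k:ℝ)) ^ (1-p)) atTop (nhds 0) := by
    simp_rw [show (1:ℝ)-p = -(p-1) from by ring]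
    exact (tendsto_rpow_neg_atTop (by linarith)).comp (base_tendsto c)
  simpa using h1.div_const (2*(p-1))

lemma tail_upper {p : ℝ} (hp : 1 < p) (n : ℕ) (hn : 1 ≤ n) :
    ∑' k, gg p (k + n) ≤ (2*(n:ℝ)) ^ (1-p) / (2*(p-1)) := by
  have hn1 : (1:ℝ) ≤ (n:ℝ) := by exact_mod_cast hn
  set G : ℕ → ℝ := fun k => (2*(n:ℝ) + 2*(k:ℝ)) ^ (1-p) / (2*(p-1)) with hG
  have hbase : ∀ k : ℕ, (0:ℝ) < 2*(n:ℝ) + 2*(k:ℝ) := fun k => by positivity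
  have hmono : ∀ k, G (k+1) ≤ G k := by
    intro k
    have h := Real.rpow_le_rpow_of_nonpos (hbase k)
      (by push_cast; linarith : 2*(n:ℝ) + 2*(k:ℝ) ≤ 2*(n:ℝ) + 2*((k+1:ℕ):ℝ))
      (by linarith : 1 - p ≤ 0)
    exact div_le_div_of_nonneg_right h (by linarith)
  have hlim : Tendsto G atTop (nhds 0) := G_lim hp _
  have htel := tele_hasSum hmono hlim
  have hpt : ∀ k, gg p (k + n) ≤ G k - G (k+1) := by
    intro k
    have hm : (1:ℝ) < 2*((k+n:ℕ):ℝ) + 1 := by push_cast; nlinarith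
    have h := upper_pt hp hm
    have e1 : 2*((k+n:ℕ):ℝ) + 1 - 1 = 2*(n:ℝ) + 2*(k:ℝ) := by push_cast; ring
    have e2 : 2*((k+n:ℕ):ℝ) + 1 + 1 = 2*(n:ℝ) + 2*((k+1:ℕ):ℝ) := by push_cast; ring
    rw [e1, e2] at h
    have : gg p (k + n) = (2*((k+n:ℕ):ℝ) + 1) ^ (-p) := rfl
    rw [this]
    simp only [hG]
    have hid : ((2*(n:ℝ) + 2*(k:ℝ)) ^ (1-p) - (2*(n:ℝ) + 2*((k+1:ℕ):ℝ)) ^ (1-p)) / (p-1)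
        = 2*((2*(n:ℝ) + 2*(k:ℝ)) ^ (1-p) / (2*(p-1)) - (2*(n:ℝ) + 2*((k+1:ℕ):ℝ)) ^ (1-p) / (2*(p-1))) :=
      half_div (by linarith)
    linarith
  calc ∑' k, gg p (k + n) ≤ ∑' k, (G k - G (k+1)) :=
        Summable.tsum_le_tsum hpt (summable_gg_tail hp n) htel.summable
    _ = G 0 := htel.tsum_eq
    _ = (2*(n:ℝ)) ^ (1-p) / (2*(p-1)) := by simp [hG]

lemma tail_lower {p : ℝ} (hp : 1 < p) (n : ℕ) :
    (2*(n:ℝ) + 1) ^ (1-p) / (2*(p-1)) ≤ ∑' k, gg p (k + n) := by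
  set H : ℕ → ℝ := fun k => (2*(n:ℝ) + 1 + 2*(k:ℝ)) ^ (1-p) / (2*(p-1)) with hH
  have hbase : ∀ k : ℕ, (0:ℝ) < 2*(n:ℝ) + 1 + 2*(k:ℝ) := fun k => by positivity
  have hmono : ∀ k, H (k+1) ≤ H k := by
    intro k
    have h := Real.rpow_le_rpow_of_nonpos (hbase k)
      (by push_cast; linarith : 2*(n:ℝ) + 1 + 2*(k:ℝ) ≤ 2*(n:ℝ) + 1 + 2*((k+1:ℕ):ℝ))
      (by linarith : 1 - p ≤ 0)
    exact div_le_div_of_nonneg_right h (by linarith)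
  have hlim : Tendsto H atTop (nhds 0) := G_lim hp _
  have htel := tele_hasSum hmono hlim
  have hpt : ∀ k, H k - H (k+1) ≤ gg p (k + n) := by
    intro k
    have hm : (0:ℝ) < 2*((k+n:ℕ):ℝ) + 1 := by positivity
    have h := lower_pt hp hm
    have e1 : (2*((k+n:ℕ):ℝ) + 1 : ℝ) = 2*(n:ℝ) + 1 + 2*(k:ℝ) := by push_cast; ring
    have e2 : (2*((k+n:ℕ):ℝ) + 1 + 2 : ℝ) = 2*(n:ℝ) + 1 + 2*((k+1:ℕ):ℝ) := by push_cast; ring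
    rw [e1] at h
    rw [show (2*(n:ℝ) + 1 + 2*(k:ℝ)) + 2 = 2*(n:ℝ) + 1 + 2*((k+1:ℕ):ℝ) from by push_cast; ring] at h
    have : gg p (k + n) = (2*(n:ℝ) + 1 + 2*(k:ℝ)) ^ (-p) := by
      rw [gg, ← e1]
    rw [this]
    simp only [hH]
    have hid : ((2*(n:ℝ) + 1 + 2*(k:ℝ)) ^ (1-p) - (2*(n:ℝ) + 1 + 2*((k+1:ℕ):ℝ)) ^ (1-p)) / (p-1)
        = 2*((2*(n:ℝ) + 1 + 2*(k:ℝ)) ^ (1-p) / (2*(p-1)) - (2*(n:ℝ) + 1 + 2*((k+1:ℕ):ℝ)) ^ (1-p) / (2*(p-1))) :=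
      half_div (by linarith)
    linarith
  calc (2*(n:ℝ) + 1) ^ (1-p) / (2*(p-1)) = H 0 := by simp [hH]
    _ ≤ ∑' k, gg p (k + n) := by
        rw [← htel.tsum_eq]
        exact Summable.tsum_le_tsum hpt htel.summable (summable_gg_tail hp n)

lemma tail_lower_strict {p : ℝ} (hp : 1 < p) (n : ℕ) :
    (2*(n:ℝ) + 1) ^ (1-p) / (2*(p-1)) < ∑' k, gg p (k + n) := by
  have hsplit : ∑' k, gg p (k + n) = gg p (0 + n) + ∑' k, gg p (k + (n+1)) := by
    rw [Summable.tsum_eq_zero_add (summable_gg_tail hp n)]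
    congr 1
    apply tsum_congr
    intro k
    congr 1
    omega
  have h1 := tail_lower hp (n+1)
  have h2 := lower_pt hp (show (0:ℝ) < 2*(n:ℝ)+1 by positivity)
  have e0 : gg p (0 + n) = (2*(n:ℝ)+1) ^ (-p) := by rw [gg]; norm_num
  have e3 : (2*((n+1:ℕ)):ℝ) + 1 = 2*(n:ℝ)+1+2 := by push_cast; ring
  rw [hsplit, e0]
  have h1' : (2*(n:ℝ)+1+2) ^ (1-p) / (2*(p-1)) ≤ ∑' k, gg p (k + (n+1)) := by
    have := h1
    rw [show (2*((n+1:ℕ):ℝ) + 1) = 2*(n:ℝ)+1+2 from by push_cast; ring] at this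
    exact this
  have hid : ((2*(n:ℝ)+1) ^ (1-p) - (2*(n:ℝ)+1+2) ^ (1-p)) / (p-1)
      = 2*((2*(n:ℝ)+1) ^ (1-p) / (2*(p-1)) - (2*(n:ℝ)+1+2) ^ (1-p) / (2*(p-1))) :=
    half_div (by linarith)
  have hT : 0 ≤ ∑' k, gg p (k + (n+1)) := tsum_nonneg fun k => Real.rpow_nonneg (by positivity) _
  linarith


theorem stmt_19 (p : ℝ) (hp : 1 < p) (n : ℕ) (hn : 1 ≤ n) :
    (1 - 2 ^ (-p)) * zetaR p - 1 / (2 ^ p * (p - 1) * (n : ℝ) ^ (p - 1)) ≤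
      ∑ k ∈ Finset.Icc 1 n, 1 / (2 * (k : ℝ) - 1) ^ p ∧
    ∑ k ∈ Finset.Icc 1 n, 1 / (2 * (k : ℝ) - 1) ^ p <
      (1 - 2 ^ (-p)) * zetaR p - 1 / (2 * (p - 1) * (2 * (n : ℝ) + 1) ^ (p - 1)) := by
  have hn0 : (0:ℝ) < (n:ℝ) := by exact_mod_cast Nat.lt_of_lt_of_le Nat.zero_lt_one hn
  have hS : ∑' j, gg p j = (1 - 2 ^ (-p)) * zetaR p := by
    simp_rw [gg_eq]
    exact odd_tsum p hp
  have hfin : ∑ k ∈ Finset.Icc 1 n, 1 / (2 * (k : ℝ) - 1) ^ p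
      = ∑ j ∈ Finset.range n, gg p j := by
    rw [← Finset.Ico_add_one_right_eq_Icc, Finset.sum_Ico_eq_sum_range]
    apply Finset.sum_congr rfl
    intro i _
    rw [gg_eq]
    congr 2
    push_cast
    ring
  have hdec := Summable.sum_add_tsum_nat_add n (summable_gg hp)
  -- ∑ i in range n, gg p i + ∑' i, gg p (i + n) = ∑' i, gg p i
  have hT := hdec
  constructor
  · have hub := tail_upper hp n hn
    have heq : (2*(n:ℝ)) ^ (1-p) / (2*(p-1)) = 1 / (2 ^ p * (p - 1) * (n : ℝ) ^ (p - 1)) := by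
      have e1 : (2*(n:ℝ))^(1-p) = ((2*(n:ℝ))^(p-1))⁻¹ := by
        rw [show (1:ℝ)-p = -(p-1) from by ring, Real.rpow_neg (by positivity)]
      have e2 : (2*(n:ℝ))^(p-1) = 2^(p-1) * (n:ℝ)^(p-1) := Real.mul_rpow (by norm_num) hn0.le
      have e3 : (2:ℝ)^p = 2 * 2^(p-1) := by
        rw [Real.rpow_sub two_pos, Real.rpow_one]; field_simp
      have h1 : (0:ℝ) < 2^(p-1) := Real.rpow_pos_of_pos two_pos _
      have h2 : (0:ℝ) < (n:ℝ)^(p-1) := Real.rpow_pos_of_pos hn0 _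
      have h3 : p - 1 ≠ 0 := by linarith
      rw [e1, e2, e3]
      field_simp
    rw [hfin]
    rw [heq] at hub
    linarith [hT]
  · have hlb := tail_lower_strict hp n
    have heq : (2*(n:ℝ)+1) ^ (1-p) / (2*(p-1))
        = 1 / (2 * (p - 1) * (2 * (n : ℝ) + 1) ^ (p - 1)) := by
      rw [show (1:ℝ)-p = -(p-1) from by ring, Real.rpow_neg (by positivity)]
      have hpos : (0:ℝ) < (2*(n:ℝ)+1) ^ (p-1) := Real.rpow_pos_of_pos (by positivity) _
      field_simp
    rw [hfin]
    rw [heq] at hlb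
    linarith [hT]
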